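/- T_{4n} = (-1)^n for all n ≥ 0, and for k ≥ 2, T_{2^{k+1}·n + 2^k - 2} = (-1)^{n+1}. -/

import Mathlib

lemma forcing {a b x ν : ℕ} (hs : a + b + 2 = 2 ^ ν) (hab : a ≤ b) (hx : x ≤ b)
    (hP : ∃ k, x + b + 2 = 2 ^ (k + 1)) : x = a := by
  obtain ⟨k, hk⟩ := hP
  have h1 : x + b + 2 < 2 * 2 ^ ν := by omega
  have h2 : 2 ^ ν < 2 * (x + b + 2) := by omega
  rw [hk] at h1 h2
  have e1 : k + 1 < ν + 1 := by
    refine (Nat.pow_lt_pow_iff_right (a := 2) (by norm_num)).1 ?_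
    calc 2 ^ (k+1) < 2 * 2 ^ ν := h1
    _ = 2 ^ (ν + 1) := by ring
  have e2 : ν < k + 2 := by
    refine (Nat.pow_lt_pow_iff_right (a := 2) (by norm_num)).1 ?_
    calc 2 ^ ν < 2 * 2 ^ (k+1) := h2
    _ = 2 ^ (k + 2) := by ring
  have e3 : k + 1 = ν := by omega
  rw [e3, ← hs] at hk
  omega

lemma mem_state {m a b y : ℕ} : y ∈ Set.Iio m ∪ Set.Icc a b ↔ (y < m ∨ (a ≤ y ∧ y ≤ b)) := by
  simp [Set.mem_union, Set.mem_Iio, Set.mem_Icc]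

lemma block : ∀ c a b m ν (f : ℕ → ℕ), b - a = c → a + b + 2 = 2 ^ ν → m ≤ a → a ≤ b →
    Set.InjOn f (Set.Iio m ∪ Set.Icc a b) →
    Set.MapsTo f (Set.Iio m ∪ Set.Icc a b) (Set.Iio m ∪ Set.Icc a b) →
    (∀ x ∈ Set.Iio m ∪ Set.Icc a b, ∃ k, x + f x + 2 = 2 ^ (k + 1)) →
    ∀ x ∈ Set.Icc a b, f x = a + b - x := by
  intro c
  induction c using Nat.strong_induction_on with
  | _ c IH =>
  intro a b m ν f hc hs hma hab hinj hmap hp x hx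
  have hfin : (Set.Iio m ∪ Set.Icc a b).Finite := (Set.finite_Iio m).union (Set.finite_Icc a b)
  have hbmem : b ∈ Set.Iio m ∪ Set.Icc a b := mem_state.2 (Or.inr ⟨hab, le_rfl⟩)
  have hamem : a ∈ Set.Iio m ∪ Set.Icc a b := mem_state.2 (Or.inr ⟨le_rfl, hab⟩)
  have hle : ∀ y ∈ Set.Iio m ∪ Set.Icc a b, y ≤ b := by
    intro y hy
    rcases mem_state.1 hy with hy | hy
    · omega
    · exact hy.2
  have hfb : f b = a := by
    refine forcing hs hab (hle _ (hmap hbmem)) ?_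
    obtain ⟨k, hk⟩ := hp b hbmem
    exact ⟨k, by omega⟩
  have hbij : Set.BijOn f (Set.Iio m ∪ Set.Icc a b) (Set.Iio m ∪ Set.Icc a b) :=
    (hfin.injOn_iff_bijOn_of_mapsTo hmap).1 hinj
  have hfa : f a = b := by
    obtain ⟨z, hz, hzb⟩ := hbij.surjOn hbmem
    have hza : z = a := by
      refine forcing hs hab (hle _ hz) ?_
      obtain ⟨k, hk⟩ := hp z hz
      exact ⟨k, by omega⟩
    rw [← hza, hzb]
  have hxab : a ≤ x ∧ x ≤ b := by
    have := hx; simp only [Set.mem_Icc] at this; exact this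
  rcases Nat.lt_or_ge a b with hlt | hge
  · rcases Nat.lt_or_ge (a+1) b with hlt2 | hge2
    · -- a + 2 ≤ b : recurse
      have hsub : (Set.Iio m ∪ Set.Icc (a+1) (b-1)) ⊆ (Set.Iio m ∪ Set.Icc a b) := by
        intro y hy
        rcases mem_state.1 hy with hy | hy
        · exact mem_state.2 (Or.inl hy)
        · exact mem_state.2 (Or.inr ⟨by omega, by omega⟩)
      have hmap' : Set.MapsTo f (Set.Iio m ∪ Set.Icc (a+1) (b-1))
          (Set.Iio m ∪ Set.Icc (a+1) (b-1)) := by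
        intro z hz
        have hzR := hsub hz
        have hz' := mem_state.1 hz
        have hfz := mem_state.1 (hmap hzR)
        have hza : z ≠ a := by omega
        have hzb : z ≠ b := by omega
        have h1 : f z ≠ a := by
          intro h
          exact hzb (hinj hzR hbmem (by rw [h, hfb]))
        have h2 : f z ≠ b := by
          intro h
          exact hza (hinj hzR hamem (by rw [h, hfa]))
        exact mem_state.2 (by omega)
      have hinj' : Set.InjOn f (Set.Iio m ∪ Set.Icc (a+1) (b-1)) := hinj.mono hsub
      have hp' : ∀ y ∈ Set.Iio m ∪ Set.Icc (a+1) (b-1), ∃ k, y + f y + 2 = 2 ^ (k + 1) :=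
        fun y hy => hp y (hsub hy)
      have hrec := IH (c - 2) (by omega) (a+1) (b-1) m ν f (by omega) (by omega) (by omega)
        (by omega) hinj' hmap' hp'
      rcases Nat.lt_or_ge x a.succ with h | h
      · have hxa : x = a := by omega
        rw [hxa, hfa]; omega
      · rcases Nat.lt_or_ge x b with h' | h'
        · have := hrec x (by simp only [Set.mem_Icc]; omega)
          omega
        · have hxb : x = b := by omega
          rw [hxb, hfb]; omega
    · -- b = a + 1
      have : x = a ∨ x = b := by omega
      rcases this with h | h
      · rw [h, hfa]; omega
      · rw [h, hfb]; omega
  · -- a = b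
    have hxa : x = a := by omega
    have hba : b = a := by omega
    rw [hxa, show a = b by omega, hfb]; omega

-- facts about pw m := 2 ^ (Nat.log 2 m + 1)
lemma pw_gt {m : ℕ} (hm : 0 < m) : m < 2 ^ (Nat.log 2 m + 1) :=
  Nat.lt_pow_succ_log_self (by norm_num) m

lemma pw_le {m : ℕ} (hm : 0 < m) : 2 ^ (Nat.log 2 m + 1) ≤ 2 * m := by
  have h := Nat.pow_log_le_self 2 (Nat.pos_iff_ne_zero.mp hm)
  calc 2 ^ (Nat.log 2 m + 1) = 2 * 2 ^ (Nat.log 2 m) := by ring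
  _ ≤ 2 * m := by omega

def sfun (m x : ℕ) : ℕ :=
  if hm : m = 0 then x
  else if 2 ^ (Nat.log 2 m + 1) - 1 - m ≤ x then 2 ^ (Nat.log 2 m + 1) - 2 - x
  else sfun (2 ^ (Nat.log 2 m + 1) - 1 - m) x
termination_by m
decreasing_by
  have h := pw_le (Nat.pos_of_ne_zero hm)
  omega

lemma sfun_props : ∀ m, ∀ x < m, sfun m x < m ∧ sfun m (sfun m x) = x ∧
    ∃ k, x + sfun m x + 2 = 2 ^ (k + 1) := by
  intro m
  induction m using Nat.strong_induction_on with
  | _ m IH =>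
  intro x hx
  have hm : m ≠ 0 := by omega
  have hgt := pw_gt (Nat.pos_of_ne_zero hm)
  have hle := pw_le (Nat.pos_of_ne_zero hm)
  set p := 2 ^ (Nat.log 2 m + 1) with hp
  set a := p - 1 - m with ha
  rcases Nat.lt_or_ge x a with hxa | hxa
  · -- lower part: recurse
    have ham : a < m := by omega
    have h1 : sfun m x = sfun a x := by
      rw [sfun]; simp only [hm, dite_false]; rw [if_neg (by omega)]
    obtain ⟨l1, l2, l3⟩ := IH a ham x hxa
    refine ⟨by omega, ?_, by rw [h1]; exact l3⟩
    rw [h1]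
    have h2 : sfun m (sfun a x) = sfun a (sfun a x) := by
      rw [sfun]; simp only [hm, dite_false]; rw [if_neg (by omega)]
    rw [h2, l2]
  · -- top block
    have h1 : sfun m x = p - 2 - x := by
      rw [sfun]; simp only [hm, dite_false]; rw [if_pos (by omega)]
    have hv : p - 2 - x < m := by omega
    have hv2 : a ≤ p - 2 - x := by omega
    have h2 : sfun m (p - 2 - x) = p - 2 - (p - 2 - x) := by
      rw [sfun]; simp only [hm, dite_false]; rw [if_pos (by omega)]
    refine ⟨by omega, ?_, ?_⟩
    · rw [h1, h2]; omega
    · exact ⟨Nat.log 2 m, by rw [h1]; omega⟩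

lemma sfun_lt {m x : ℕ} (hx : x < m) : sfun m x < m := (sfun_props m x hx).1
lemma sfun_invol {m x : ℕ} (hx : x < m) : sfun m (sfun m x) = x := (sfun_props m x hx).2.1
lemma sfun_pow {m x : ℕ} (hx : x < m) : ∃ k, x + sfun m x + 2 = 2 ^ (k + 1) :=
  (sfun_props m x hx).2.2

lemma unique_f : ∀ m (f : ℕ → ℕ), Set.InjOn f (Set.Iio m) → Set.MapsTo f (Set.Iio m) (Set.Iio m) →
    (∀ x < m, ∃ k, x + f x + 2 = 2 ^ (k + 1)) → ∀ x < m, f x = sfun m x := by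
  intro m
  induction m using Nat.strong_induction_on with
  | _ m IH =>
  intro f hinj hmap hp x hx
  have hm : m ≠ 0 := by omega
  have hgt := pw_gt (Nat.pos_of_ne_zero hm)
  have hle := pw_le (Nat.pos_of_ne_zero hm)
  set p := 2 ^ (Nat.log 2 m + 1) with hp2
  set a := p - 1 - m with ha
  have hseteq : Set.Iio m = Set.Iio a ∪ Set.Icc a (m-1) := by
    ext y
    rw [mem_state]
    simp only [Set.mem_Iio]
    omega
  have hblock := block ((m-1) - a) a (m-1) a (Nat.log 2 m + 1) f rfl (by omega) le_rfl
    (by omega) (by rw [← hseteq]; exact hinj) (by rw [← hseteq]; exact hmap)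
    (by rw [← hseteq]; intro y hy; exact hp y (Set.mem_Iio.1 hy))
  have hblock' : ∀ y, a ≤ y → y < m → f y = p - 2 - y := by
    intro y h1 h2
    have := hblock y (by simp only [Set.mem_Icc]; omega)
    omega
  rcases Nat.lt_or_ge x a with hxa | hxa
  · -- lower part
    have hmapsa : Set.MapsTo f (Set.Iio a) (Set.Iio a) := by
      intro z hz
      have hz' : z < a := hz
      have hfz : f z < m := hmap (by simp only [Set.mem_Iio]; omega)
      by_contra hcon
      have hfza : a ≤ f z := by simpa using hcon
      have hy : f (p - 2 - f z) = f z := by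
        rw [hblock' (p - 2 - f z) (by omega) (by omega)]
        omega
      have := hinj (Set.mem_Iio.2 (show z < m by omega))
        (Set.mem_Iio.2 (show p - 2 - f z < m by omega)) hy.symm
      omega
    have h1 : f x = sfun a x := IH a (by omega) f (hinj.mono (by intro y hy; simp only [Set.mem_Iio] at *; omega))
      hmapsa (fun y hy => hp y (by omega)) x hxa
    have h2 : sfun m x = sfun a x := by
      rw [sfun]; simp only [hm, dite_false]; rw [if_neg (by omega)]
    rw [h1, h2]
  · -- top block
    rw [hblock' x hxa hx]
    rw [sfun]; simp only [hm, dite_false]; rw [if_pos (by omega)]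

def revAux (n a b : ℕ) (hb : b < n) (x : Fin n) : Fin n :=
  if h : a ≤ (x:ℕ) ∧ (x:ℕ) ≤ b then ⟨a + b - (x:ℕ), by omega⟩ else x

lemma revAux_val (n a b : ℕ) (hb : b < n) (x : Fin n) :
    (revAux n a b hb x : ℕ) = if a ≤ (x:ℕ) ∧ (x:ℕ) ≤ b then a + b - (x:ℕ) else (x:ℕ) := by
  unfold revAux
  split_ifs <;> rfl

lemma revAux_invol (n a b : ℕ) (hb : b < n) : Function.Involutive (revAux n a b hb) := by
  intro x
  apply Fin.ext
  rw [revAux_val, revAux_val]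
  split_ifs <;> omega

noncomputable def revPerm (n a b : ℕ) (hb : b < n) : Equiv.Perm (Fin n) :=
  (revAux_invol n a b hb).toPerm _

lemma revPerm_val (n a b : ℕ) (hb : b < n) (x : Fin n) :
    (revPerm n a b hb x : ℕ) = if a ≤ (x:ℕ) ∧ (x:ℕ) ≤ b then a + b - (x:ℕ) else (x:ℕ) :=
  revAux_val n a b hb x

lemma swap_val (n : ℕ) (p q x : Fin n) :
    ((Equiv.swap p q) x : ℕ) = if (x:ℕ) = (p:ℕ) then (q:ℕ) else if (x:ℕ) = (q:ℕ) then (p:ℕ) else (x:ℕ) := by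
  rw [Equiv.swap_apply_def]
  by_cases h1 : x = p
  · rw [if_pos h1, if_pos (by rw [h1])]
  · rw [if_neg h1, if_neg (fun hc => h1 (Fin.ext hc))]
    by_cases h2 : x = q
    · rw [if_pos h2, if_pos (by rw [h2])]
    · rw [if_neg h2, if_neg (fun hc => h2 (Fin.ext hc))]

lemma revPerm_id (n a b : ℕ) (hb : b < n) (hab : b ≤ a) : revPerm n a b hb = 1 := by
  ext x
  rw [revPerm_val]
  simp only [Equiv.Perm.coe_one, id_eq]
  split_ifs <;> omega

lemma revPerm_swap (n a b : ℕ) (hb : b < n) (hab : a < b) :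
    revPerm n a b hb = Equiv.swap (⟨a, by omega⟩ : Fin n) ⟨b, hb⟩ * revPerm n (a+1) (b-1) (by omega) := by
  ext x
  rw [Equiv.Perm.mul_apply, revPerm_val, swap_val, revPerm_val]
  simp only [Fin.val_mk]
  split_ifs <;> omega

lemma revPerm_sign : ∀ c n a b (hb : b < n), b - a = c →
    Equiv.Perm.sign (revPerm n a b hb) = (-1) ^ ((b + 1 - a) / 2) := by
  intro c
  induction c using Nat.strong_induction_on with
  | _ c IH =>
  intro n a b hb hc
  rcases Nat.lt_or_ge a b with hab | hab
  · rw [revPerm_swap n a b hb hab, map_mul, Equiv.Perm.sign_swap (by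
      intro hc2; apply absurd (congrArg Fin.val hc2); simp; omega)]
    rw [IH (b - 1 - (a+1)) (by omega) n (a+1) (b-1) (by omega) rfl]
    have h1 : (b + 1 - a) / 2 = (b - 1 + 1 - (a + 1)) / 2 + 1 := by omega
    rw [h1, pow_succ, mul_comm]
  · rw [revPerm_id n a b hb hab]
    have : (b + 1 - a) / 2 = 0 := by omega
    rw [this, pow_zero, map_one]

def piAux (n m : ℕ) (hm : m ≤ n) (x : Fin n) : Fin n :=
  if h : (x:ℕ) < m then ⟨sfun m x, lt_of_lt_of_le (sfun_lt h) hm⟩ else x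

lemma piAux_val (n m : ℕ) (hm : m ≤ n) (x : Fin n) :
    (piAux n m hm x : ℕ) = if (x:ℕ) < m then sfun m (x:ℕ) else (x:ℕ) := by
  unfold piAux; split_ifs <;> rfl

lemma piAux_invol (n m : ℕ) (hm : m ≤ n) : Function.Involutive (piAux n m hm) := by
  intro x
  apply Fin.ext
  rw [piAux_val, piAux_val]
  by_cases h : (x:ℕ) < m
  · rw [if_pos h, if_pos (sfun_lt h), sfun_invol h]
  · rw [if_neg h, if_neg h]

noncomputable def piPerm (n m : ℕ) (hm : m ≤ n) : Equiv.Perm (Fin n) :=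
  (piAux_invol n m hm).toPerm _

lemma piPerm_val (n m : ℕ) (hm : m ≤ n) (x : Fin n) :
    (piPerm n m hm x : ℕ) = if (x:ℕ) < m then sfun m (x:ℕ) else (x:ℕ) :=
  piAux_val n m hm x

noncomputable def dsgn (m : ℕ) : ℤ :=
  if hm : m = 0 then 1
  else (-1) ^ ((m - (2 ^ (Nat.log 2 m + 1) - 1 - m)) / 2) *
    dsgn (2 ^ (Nat.log 2 m + 1) - 1 - m)
termination_by m
decreasing_by
  have h := pw_le (Nat.pos_of_ne_zero hm)
  omega

lemma sfun_low {m x : ℕ} (hm : m ≠ 0) (hx : x < 2 ^ (Nat.log 2 m + 1) - 1 - m) :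
    sfun m x = sfun (2 ^ (Nat.log 2 m + 1) - 1 - m) x := by
  rw [sfun]; simp only [hm, dite_false]; rw [if_neg (by omega)]

lemma sfun_high {m x : ℕ} (hm : m ≠ 0) (hx : 2 ^ (Nat.log 2 m + 1) - 1 - m ≤ x) :
    sfun m x = 2 ^ (Nat.log 2 m + 1) - 2 - x := by
  rw [sfun]; simp only [hm, dite_false]; rw [if_pos hx]

lemma piPerm_zero (n : ℕ) : piPerm n 0 (Nat.zero_le n) = 1 := by
  ext x
  rw [piPerm_val]
  simp only [Nat.not_lt_zero, if_false, Equiv.Perm.coe_one, id_eq]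

lemma piPerm_decomp (n m : ℕ) (hm : m ≤ n) (hm0 : m ≠ 0) :
    piPerm n m hm = revPerm n (2 ^ (Nat.log 2 m + 1) - 1 - m) (m - 1) (by omega) *
      piPerm n (2 ^ (Nat.log 2 m + 1) - 1 - m) (by
        have := pw_le (Nat.pos_of_ne_zero hm0); omega) := by
  have hgt := pw_gt (Nat.pos_of_ne_zero hm0)
  have hle := pw_le (Nat.pos_of_ne_zero hm0)
  ext x
  rw [Equiv.Perm.mul_apply, piPerm_val, revPerm_val, piPerm_val]
  rcases Nat.lt_or_ge (x:ℕ) (2 ^ (Nat.log 2 m + 1) - 1 - m) with h1 | h1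
  · have hsl := sfun_lt (m := 2 ^ (Nat.log 2 m + 1) - 1 - m) (x := (x:ℕ)) h1
    rw [if_pos h1, if_pos (show (x:ℕ) < m by omega), sfun_low hm0 h1, if_neg (by omega)]
  · have hne : ¬((x:ℕ) < 2 ^ (Nat.log 2 m + 1) - 1 - m) := by omega
    rcases Nat.lt_or_ge (x:ℕ) m with h2 | h2
    · rw [if_neg hne, if_pos h2, sfun_high hm0 h1, if_pos (show _ ∧ _ from ⟨h1, by omega⟩)]
      omega
    · rw [if_neg hne, if_neg (show ¬((x:ℕ) < m) by omega),
        if_neg (show ¬(2 ^ (Nat.log 2 m + 1) - 1 - m ≤ (x:ℕ) ∧ (x:ℕ) ≤ m - 1) by omega)]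

lemma sign_piPerm : ∀ m n (hm : m ≤ n),
    ((Equiv.Perm.sign (piPerm n m hm) : ℤˣ) : ℤ) = dsgn m := by
  intro m
  induction m using Nat.strong_induction_on with
  | _ m IH =>
  intro n hm
  by_cases hm0 : m = 0
  · subst hm0
    rw [piPerm_zero, map_one, dsgn]
    norm_num
  · have hgt := pw_gt (Nat.pos_of_ne_zero hm0)
    have hle := pw_le (Nat.pos_of_ne_zero hm0)
    set p := 2 ^ (Nat.log 2 m + 1) with hp
    set a := p - 1 - m with ha
    rw [piPerm_decomp n m hm hm0, map_mul]
    have hrev := revPerm_sign (m - 1 - a) n a (m-1) (by omega) rfl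
    rw [Units.val_mul, hrev, IH a (by omega) n (by omega)]
    conv_rhs => rw [dsgn]
    simp only [hm0, dite_false]
    have he : (m - 1 + 1 - a) / 2 = (m - a) / 2 := by omega
    rw [he]
    push_cast
    ring

open Classical in
noncomputable def A (n : ℕ) : ℤ := if ∃ k : ℕ, n + 2 = 2 ^ (k + 1) then 1 else 0

noncomputable def D (n : ℕ) : ℤ :=
  Matrix.det (Matrix.of fun i j : Fin n => A ((i : ℕ) + j))

noncomputable def T (n : ℕ) : ℤ := D n * D (n + 2)

lemma A_eq_one {x : ℕ} (h : ∃ k : ℕ, x + 2 = 2 ^ (k + 1)) : A x = 1 := by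
  rw [A, if_pos h]

lemma A_ne_zero {x : ℕ} (h : A x ≠ 0) : ∃ k : ℕ, x + 2 = 2 ^ (k + 1) := by
  by_contra hc
  rw [A, if_neg hc] at h
  exact h rfl

lemma D_eq (n : ℕ) : D n = dsgn n := by
  classical
  rw [D, Matrix.det_apply]
  rw [Finset.sum_eq_single_of_mem (piPerm n n le_rfl) (Finset.mem_univ _) ?_]
  · have h1 : ∀ i : Fin n,
        (Matrix.of fun i j : Fin n => A ((i : ℕ) + j)) (piPerm n n le_rfl i) i = 1 := by
      intro i
      show A (((piPerm n n le_rfl i : Fin n) : ℕ) + (i:ℕ)) = 1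
      have hv : ((piPerm n n le_rfl i : Fin n) : ℕ) = sfun n (i:ℕ) := by
        rw [piPerm_val, if_pos i.2]
      apply A_eq_one
      obtain ⟨k, hk⟩ := sfun_pow (show (i:ℕ) < n from i.2)
      exact ⟨k, by rw [hv]; omega⟩
    rw [Finset.prod_congr rfl (fun i _ => h1 i), Finset.prod_const_one]
    rw [Units.smul_def, smul_eq_mul, mul_one]
    exact sign_piPerm n n le_rfl
  · intro τ _ hτ
    have hzero : (∏ i : Fin n, (Matrix.of fun i j : Fin n => A ((i : ℕ) + j)) (τ i) i) = 0 := by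
      by_contra h0
      have hall : ∀ i : Fin n, A (((τ i : Fin n) : ℕ) + (i:ℕ)) ≠ 0 := by
        intro i
        have := Finset.prod_ne_zero_iff.1 h0 i (Finset.mem_univ i)
        exact this
      set f : ℕ → ℕ := fun x => if h : x < n then ((τ ⟨x, h⟩ : Fin n) : ℕ) else x with hf
      have hfval : ∀ x (hx : x < n), f x = ((τ ⟨x, hx⟩ : Fin n) : ℕ) := by
        intro x hx; rw [hf]; simp only [hx, dite_true]
      have hinj : Set.InjOn f (Set.Iio n) := by
        intro x hx y hy hxy
        rw [hfval x hx, hfval y hy] at hxy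
        have h2 := τ.injective (Fin.ext hxy)
        exact congrArg Fin.val h2
      have hmap : Set.MapsTo f (Set.Iio n) (Set.Iio n) := by
        intro x hx
        have hx' : x < n := hx
        rw [Set.mem_Iio, hfval x hx']
        exact (τ ⟨x, hx'⟩).2
      have hp : ∀ x < n, ∃ k, x + f x + 2 = 2 ^ (k + 1) := by
        intro x hx
        rw [hfval x hx]
        obtain ⟨k, hk⟩ := A_ne_zero (hall ⟨x, hx⟩)
        exact ⟨k, by simp only [Fin.val_mk] at hk; omega⟩
      have huniq := unique_f n f hinj hmap hp
      apply hτ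
      apply Equiv.ext
      intro i
      apply Fin.ext
      have h3 := huniq (i:ℕ) i.2
      rw [hfval (i:ℕ) i.2] at h3
      rw [piPerm_val, if_pos i.2]
      calc ((τ i : Fin n) : ℕ) = ((τ ⟨(i:ℕ), i.2⟩ : Fin n) : ℕ) := by congr
      _ = sfun n (i:ℕ) := h3
    rw [hzero, smul_zero]

lemma dsgn_zero : dsgn 0 = 1 := by rw [dsgn]; norm_num

lemma dsgn_rec {ν m : ℕ} (h1 : 2 ^ ν ≤ m) (h2 : m < 2 ^ (ν + 1)) :
    dsgn m = (-1) ^ (m - 2 ^ ν) * dsgn (2 ^ (ν + 1) - 1 - m) := by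
  have hm0 : m ≠ 0 := by have : (0:ℕ) < 2 ^ ν := Nat.pow_pos (by norm_num); omega
  have hlog : Nat.log 2 m = ν := Nat.log_eq_of_pow_le_of_lt_pow h1 h2
  have hpow : (2:ℕ) ^ (ν + 1) = 2 * 2 ^ ν := by ring
  conv_lhs => rw [dsgn]
  simp only [hm0, dite_false, hlog]
  have he : (m - (2 ^ (ν + 1) - 1 - m)) / 2 = m - 2 ^ ν := by omega
  rw [he]

lemma dsgn_one : dsgn 1 = 1 := by
  rw [dsgn_rec (ν := 0) (by norm_num) (by norm_num)]
  norm_num [dsgn_zero]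

lemma dsgn_pow_sub_one {ν : ℕ} (hν : 1 ≤ ν) : dsgn (2 ^ (ν + 1) - 1) = -1 := by
  have hp : (2:ℕ) ^ (ν + 1) = 2 * 2 ^ ν := by ring
  have h2 : (2:ℕ) ^ ν ≥ 2 := by
    calc (2:ℕ) = 2 ^ 1 := by norm_num
    _ ≤ 2 ^ ν := Nat.pow_le_pow_right (by norm_num) hν
  rw [dsgn_rec (ν := ν) (by omega) (by omega)]
  have he1 : 2 ^ (ν + 1) - 1 - (2 ^ (ν + 1) - 1) = 0 := by omega
  have he2 : 2 ^ (ν + 1) - 1 - 2 ^ ν = 2 ^ ν - 1 := by omega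
  rw [he1, he2, dsgn_zero, mul_one]
  have hodd : Odd (2 ^ ν - 1) := ⟨2 ^ (ν - 1) - 1, by
    have : (2:ℕ) ^ ν = 2 * 2 ^ (ν - 1) := by
      rw [← pow_succ']; congr 1; omega
    omega⟩
  exact Odd.neg_one_pow hodd

lemma dsgn_pow_sub_two {ν : ℕ} (hν : 1 ≤ ν) : dsgn (2 ^ (ν + 1) - 2) = 1 := by
  have hp : (2:ℕ) ^ (ν + 1) = 2 * 2 ^ ν := by ring
  have h2 : (2:ℕ) ^ ν ≥ 2 := by
    calc (2:ℕ) = 2 ^ 1 := by norm_num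
    _ ≤ 2 ^ ν := Nat.pow_le_pow_right (by norm_num) hν
  rw [dsgn_rec (ν := ν) (by omega) (by omega)]
  have he1 : 2 ^ (ν + 1) - 1 - (2 ^ (ν + 1) - 2) = 1 := by omega
  have he2 : 2 ^ (ν + 1) - 2 - 2 ^ ν = 2 ^ ν - 2 := by omega
  rw [he1, he2, dsgn_one, mul_one]
  have heven : Even (2 ^ ν - 2) := ⟨2 ^ (ν - 1) - 1, by
    have : (2:ℕ) ^ ν = 2 * 2 ^ (ν - 1) := by
      rw [← pow_succ']; congr 1; omega
    omega⟩
  exact Even.neg_one_pow heven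

lemma dsgn_pow {ν : ℕ} (hν : 1 ≤ ν) : dsgn (2 ^ (ν + 1)) = -1 := by
  have hp : (2:ℕ) ^ (ν + 2) = 2 * 2 ^ (ν + 1) := by ring
  have h2 : (2:ℕ) ^ (ν+1) ≥ 4 := by
    calc (4:ℕ) = 2 ^ 2 := by norm_num
    _ ≤ 2 ^ (ν+1) := Nat.pow_le_pow_right (by norm_num) (by omega)
  rw [dsgn_rec (ν := ν + 1) (by omega) (by omega)]
  have he1 : 2 ^ (ν + 1 + 1) - 1 - 2 ^ (ν + 1) = 2 ^ (ν + 1) - 1 := by omega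
  have he2 : 2 ^ (ν + 1) - 2 ^ (ν + 1) = 0 := by omega
  rw [he1, he2, pow_zero, one_mul, dsgn_pow_sub_one hν]

lemma dsgn_pow_add_one {ν : ℕ} (hν : 1 ≤ ν) : dsgn (2 ^ (ν + 1) + 1) = -1 := by
  have hp : (2:ℕ) ^ (ν + 2) = 2 * 2 ^ (ν + 1) := by ring
  have h2 : (2:ℕ) ^ (ν+1) ≥ 4 := by
    calc (4:ℕ) = 2 ^ 2 := by norm_num
    _ ≤ 2 ^ (ν+1) := Nat.pow_le_pow_right (by norm_num) (by omega)
  rw [dsgn_rec (ν := ν + 1) (by omega) (by omega)]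
  have he1 : 2 ^ (ν + 1 + 1) - 1 - (2 ^ (ν + 1) + 1) = 2 ^ (ν + 1) - 2 := by omega
  have he2 : 2 ^ (ν + 1) + 1 - 2 ^ (ν + 1) = 1 := by omega
  rw [he1, he2, pow_one, dsgn_pow_sub_two hν]
  norm_num

lemma T_boundary1 {ν : ℕ} (hν : 1 ≤ ν) : T (2 ^ (ν + 1) - 2) = -1 := by
  have h2 : (2:ℕ) ^ (ν+1) ≥ 4 := by
    calc (4:ℕ) = 2 ^ 2 := by norm_num
    _ ≤ 2 ^ (ν+1) := Nat.pow_le_pow_right (by norm_num) (by omega)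
  rw [T, D_eq, D_eq]
  have he : 2 ^ (ν + 1) - 2 + 2 = 2 ^ (ν + 1) := by omega
  rw [he, dsgn_pow_sub_two hν, dsgn_pow hν]
  norm_num

lemma T_boundary2 {ν : ℕ} (hν : 1 ≤ ν) : T (2 ^ (ν + 1) - 1) = 1 := by
  have h2 : (2:ℕ) ^ (ν+1) ≥ 4 := by
    calc (4:ℕ) = 2 ^ 2 := by norm_num
    _ ≤ 2 ^ (ν+1) := Nat.pow_le_pow_right (by norm_num) (by omega)
  rw [T, D_eq, D_eq]
  have he : 2 ^ (ν + 1) - 1 + 2 = 2 ^ (ν + 1) + 1 := by omega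
  rw [he, dsgn_pow_sub_one hν, dsgn_pow_add_one hν]
  norm_num

lemma T_zero : T 0 = 1 := by
  rw [T, D_eq, D_eq, dsgn_zero]
  have : dsgn 2 = 1 := by
    rw [dsgn_rec (ν := 1) (by norm_num) (by norm_num)]
    norm_num [dsgn_one]
  rw [this]; norm_num

lemma T_one : T 1 = -1 := by
  rw [T, D_eq, D_eq, dsgn_one]
  have : dsgn 3 = -1 := by
    rw [dsgn_rec (ν := 1) (by norm_num) (by norm_num)]
    norm_num [dsgn_zero]
  rw [this]; norm_num

lemma T_reflect {ν m : ℕ} (h1 : 2 ^ ν ≤ m) (h2 : m + 2 < 2 ^ (ν + 1)) :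
    T m = T (2 ^ (ν + 1) - 3 - m) := by
  have hp : (2:ℕ) ^ (ν + 1) = 2 * 2 ^ ν := by ring
  rw [T, T, D_eq, D_eq, D_eq, D_eq]
  rw [dsgn_rec (ν := ν) (m := m) h1 (by omega), dsgn_rec (ν := ν) (m := m + 2) (by omega) (by omega)]
  have he1 : 2 ^ (ν + 1) - 3 - m + 2 = 2 ^ (ν + 1) - 1 - m := by omega
  have he2 : 2 ^ (ν + 1) - 1 - (m + 2) = 2 ^ (ν + 1) - 3 - m := by omega
  have he3 : m + 2 - 2 ^ ν = (m - 2 ^ ν) + 2 := by omega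
  rw [he1, he2, he3]
  rw [pow_add]
  ring_nf
  rw [show ((-1:ℤ)) ^ ((m - 2 ^ ν) * 2) = 1 by
    rw [pow_mul]
    rcases Nat.even_or_odd (m - 2 ^ ν) with h | h
    · rw [h.neg_one_pow]; norm_num
    · rw [h.neg_one_pow]; norm_num,
    mul_one]

lemma neg_one_pow_parity {p q : ℕ} (h : p % 2 = q % 2) : ((-1:ℤ)) ^ p = (-1) ^ q := by
  rcases Nat.even_or_odd p with hp | hp
  · have hq : Even q := by rw [Nat.even_iff] at *; omega
    rw [hp.neg_one_pow, hq.neg_one_pow]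
  · have hq : Odd q := by rw [Nat.odd_iff] at *; omega
    rw [hp.neg_one_pow, hq.neg_one_pow]

lemma pow_decomp_unique {k b j : ℕ} (h : 2 ^ (k + 1) * (2 * b + 1) = 2 ^ j) :
    b = 0 ∧ k + 1 = j := by
  have h1 : 2 ^ (k + 1) ≤ 2 ^ j := by
    calc 2 ^ (k+1) ≤ 2 ^ (k+1) * (2*b+1) := Nat.le_mul_of_pos_right _ (by omega)
    _ = 2 ^ j := h
  have h2 : k + 1 ≤ j := (Nat.pow_le_pow_iff_right (by norm_num)).1 h1
  have h3 : (2:ℕ) ^ j = 2 ^ (k+1) * 2 ^ (j - (k+1)) := by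
    rw [← pow_add]; congr 1; omega
  rw [h3] at h
  have h4 : 2 * b + 1 = 2 ^ (j - (k+1)) := by
    have hpos : (0:ℕ) < 2 ^ (k+1) := Nat.pow_pos (by norm_num)
    exact Nat.eq_of_mul_eq_mul_left hpos h
  rcases Nat.eq_zero_or_pos (j - (k+1)) with h5 | h5
  · rw [h5, pow_zero] at h4; constructor <;> omega
  · exfalso
    have h6 : (2:ℕ) ^ (j - (k+1)) = 2 * 2 ^ (j - (k+1) - 1) := by
      rw [← pow_succ']; congr 1; omega
    omega

lemma pow_interval_k {k b ν w : ℕ} (hw : w = 2 ^ (k + 1) * (2 * b + 1))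
    (hlo : 2 ^ ν < w) (hhi : w < 2 ^ (ν + 1)) : k + 1 < ν := by
  have hp : (2:ℕ) ^ (ν + 1) = 2 * 2 ^ ν := by ring
  by_contra hc
  push_neg at hc
  rcases Nat.lt_or_ge (k+1) (ν+1) with h1 | h1
  · have hk : k + 1 = ν := by omega
    subst hk
    rcases Nat.eq_zero_or_pos b with hb | hb
    · subst hb; omega
    · have h7 : w ≥ 2 ^ (k+1) * 3 := by
        rw [hw]; exact Nat.mul_le_mul_left _ (by omega)
      omega
  · have h8 : (2:ℕ) ^ (ν + 1) ≤ 2 ^ (k + 1) := Nat.pow_le_pow_right (by norm_num) h1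
    have h9 : w ≥ 2 ^ (k+1) := by
      rw [hw]; exact Nat.le_mul_of_pos_right _ (by omega)
    omega

lemma T_formula : ∀ m, ∀ k b : ℕ,
    (Even m → m + 2 = 2 ^ (k + 1) * (2 * b + 1) →
      T m = (-1) ^ (b + if k = 0 then 0 else 1)) ∧
    (¬Even m → m + 1 = 2 ^ (k + 1) * (2 * b + 1) →
      T m = (-1) ^ (b + 1 + if k = 0 then 0 else 1)) := by
  intro m
  induction m using Nat.strong_induction_on with
  | _ m IH =>
  intro k b
  rcases Nat.lt_or_ge m 2 with hm2 | hm2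
  · interval_cases m
    · refine ⟨fun _ h => ?_, fun h _ => absurd (by norm_num : Even 0) h⟩
      obtain ⟨hb, hk⟩ := pow_decomp_unique (k := k) (b := b) (j := 1) (by omega)
      have hk0 : k = 0 := by omega
      rw [T_zero, hb, hk0]
      norm_num
    · refine ⟨fun h _ => by norm_num at h, fun _ h => ?_⟩
      obtain ⟨hb, hk⟩ := pow_decomp_unique (k := k) (b := b) (j := 1) (by omega)
      have hk0 : k = 0 := by omega
      rw [T_one, hb, hk0]
      norm_num
  · set ν := Nat.log 2 m with hν
    have hm0 : m ≠ 0 := by omega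
    have hlo : 2 ^ ν ≤ m := Nat.pow_log_le_self 2 hm0
    have hhi : m < 2 ^ (ν + 1) := Nat.lt_pow_succ_log_self (by norm_num) m
    have hν1 : 1 ≤ ν := by
      rw [hν]
      exact (Nat.le_log_iff_pow_le (by norm_num) hm0).2 (by omega : (2:ℕ)^1 ≤ m)
    have hp : (2:ℕ) ^ (ν + 1) = 2 * 2 ^ ν := by ring
    have h4 : (4:ℕ) ≤ 2 ^ (ν + 1) := by
      calc (4:ℕ) = 2 ^ 2 := by norm_num
      _ ≤ 2 ^ (ν + 1) := Nat.pow_le_pow_right (by norm_num) (by omega)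
    rcases Nat.lt_or_ge (m + 2) (2 ^ (ν + 1)) with hmid | hbnd
    · -- reflection case
      set ms := 2 ^ (ν + 1) - 3 - m with hms
      have hmslt : ms < m := by omega
      have hrefl : T m = T ms := T_reflect hlo hmid
      have main : ∀ w, 2 ^ ν < w → w < 2 ^ (ν+1) → w = 2 ^ (k + 1) * (2 * b + 1) →
          ∃ c, 2 ^ (ν+1) - w = 2 ^ (k + 1) * (2 * c + 1) ∧ (c + b) % 2 = 1 := by
        intro w hw1 hw2 hw3
        have hkν : k + 1 < ν := pow_interval_k hw3 hw1 hw2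
        have hj : (1:ℕ) ≤ 2 ^ k := Nat.one_le_two_pow
        have hj2 : (1:ℕ) ≤ 2 ^ (ν - k - 1) := Nat.one_le_two_pow
        have hj3 : (1:ℕ) ≤ 2 ^ (ν - k - 2) := Nat.one_le_two_pow
        have hx : (2:ℕ) ^ (ν + 1) = 2 ^ (k+1) * 2 ^ (ν - k) := by
          rw [← pow_add]; congr 1; omega
        have hy : (2:ℕ) ^ (ν - k) = 2 * 2 ^ (ν - k - 1) := by
          rw [← pow_succ']; congr 1; omega
        have hb' : b + 1 ≤ 2 ^ (ν - k - 1) := by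
          by_contra hcon
          push_neg at hcon
          have e1 : 2 ^ (ν+1) + 2 ^ (k+1) ≤ w := by
            calc 2 ^ (ν+1) + 2 ^ (k+1) = 2 ^ (k+1) * (2 * 2 ^ (ν - k - 1) + 1) := by
                  rw [hx, hy]; ring
            _ ≤ 2 ^ (k+1) * (2 * b + 1) := Nat.mul_le_mul_left _ (by omega)
            _ = w := hw3.symm
          omega
        obtain ⟨c, hc⟩ : ∃ c, 2 ^ (ν - k - 1) = c + b + 1 := ⟨2 ^ (ν-k-1) - 1 - b, by omega⟩
        refine ⟨c, ?_, ?_⟩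
        · have e2 : w + 2 ^ (k+1) * (2 * c + 1) = 2 ^ (ν+1) := by
            rw [hw3, hx, hy, hc]; ring
          omega
        · have hev : (2:ℕ) ^ (ν - k - 1) = 2 * 2 ^ (ν - k - 2) := by
            rw [← pow_succ']; congr 1; omega
          omega
      constructor
      · intro hev hdec
        obtain ⟨c, hcdec, hcpar⟩ := main (m + 2) (by omega) (by omega) hdec
        have hmsodd : ¬ Even ms := by
          rcases hev with ⟨r, hr⟩
          rw [Nat.even_iff]; omega
        have hmsdec : ms + 1 = 2 ^ (k + 1) * (2 * c + 1) := by omega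
        rw [hrefl, (IH ms hmslt k c).2 hmsodd hmsdec]
        apply neg_one_pow_parity
        omega
      · intro hodd hdec
        have hr : m % 2 = 1 := by rw [Nat.even_iff] at hodd; omega
        obtain ⟨c, hcdec, hcpar⟩ := main (m + 1) (by omega) (by omega) hdec
        have hmsev : Even ms := by rw [Nat.even_iff]; omega
        have hmsdec : ms + 2 = 2 ^ (k + 1) * (2 * c + 1) := by omega
        rw [hrefl, (IH ms hmslt k c).1 hmsev hmsdec]
        apply neg_one_pow_parity
        omega
    · -- boundary cases
      rcases Nat.lt_or_ge m (2 ^ (ν + 1) - 1) with hc1 | hc1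
      · -- m = 2^(ν+1) - 2
        have hme : m = 2 ^ (ν + 1) - 2 := by omega
        have hev : Even m := ⟨2 ^ ν - 1, by omega⟩
        refine ⟨fun _ hdec => ?_, fun h _ => absurd hev h⟩
        obtain ⟨hb, hk⟩ := pow_decomp_unique (k := k) (b := b) (j := ν + 1) (by omega)
        have hk0 : ¬ (k = 0) := by omega
        rw [hme, T_boundary1 hν1, hb]
        simp only [hk0, if_false]
        norm_num
      · -- m = 2^(ν+1) - 1
        have hme : m = 2 ^ (ν + 1) - 1 := by omega
        have hodd : ¬ Even m := by rw [Nat.even_iff]; omega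
        refine ⟨fun h _ => absurd h hodd, fun _ hdec => ?_⟩
        obtain ⟨hb, hk⟩ := pow_decomp_unique (k := k) (b := b) (j := ν + 1) (by omega)
        have hk0 : ¬ (k = 0) := by omega
        rw [hme, T_boundary2 hν1, hb]
        simp only [hk0, if_false]
        norm_num

theorem stmt10 :
    (∀ n : ℕ, T (4 * n) = (-1 : ℤ) ^ n) ∧
    (∀ k n : ℕ, 2 ≤ k → T (2 ^ (k + 1) * n + 2 ^ k - 2) = (-1 : ℤ) ^ (n + 1)) := by
  constructor
  · intro n
    have hev : Even (4 * n) := ⟨2 * n, by ring⟩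
    have hdec : 4 * n + 2 = 2 ^ (0 + 1) * (2 * n + 1) := by ring
    have := (T_formula (4 * n) 0 n).1 hev hdec
    simpa using this
  · intro k n hk
    have h1 : (2:ℕ) ^ k = 2 * 2 ^ (k - 1) := by
      rw [← pow_succ']; congr 1; omega
    have h2 : (2:ℕ) ^ (k - 1) = 2 * 2 ^ (k - 2) := by
      rw [← pow_succ']; congr 1; omega
    have h3 : (2:ℕ) ^ (k + 1) = 2 * 2 ^ k := by ring
    set m := 2 ^ (k + 1) * n + 2 ^ k - 2 with hm
    have hj : (1:ℕ) ≤ 2 ^ (k - 2) := Nat.one_le_two_pow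
    have h4 : 2 ^ (k+1) * n + 2 ^ k = 2 * (2 ^ k * n + 2 ^ (k - 1)) := by
      rw [h3, h1]; ring
    have hev : Even m := by
      rw [Nat.even_iff, hm]
      omega
    have hdec : m + 2 = 2 ^ ((k - 1) + 1) * (2 * n + 1) := by
      have hk1 : k - 1 + 1 = k := by omega
      rw [hk1, hm]
      have e1 : (2:ℕ) ^ k * (2 * n + 1) = 2 ^ (k+1) * n + 2 ^ k := by
        rw [h3]; ring
      omega
    have := (T_formula m (k - 1) n).1 hev hdec
    rw [this, if_neg (by omega)]
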